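/- Let g be a pseudo-Riemannian metric in coordinates on M, let V be a connected relatively open subset of Ū meeting {x_0 = 0}, and suppose (ρ, h) and (ρ', h') are two pairs consisting of a local defining function on V together with a smooth symmetric-matrix-valued map on V, both nondegenerate on {v ∈ ℝ^N : v_0 = 0} along V ∩ {x_0 = 0}, such that on V ∩ M one has g_{ij} = C ρ^{−2}(∂_i ρ)(∂_j ρ) + ρ^{−1} h_{ij} and g_{ij} = C ρ'^{−2}(∂_i ρ')(∂_j ρ') + ρ'^{−1} h'_{ij} for the same constant C ≠ 0. Then there is a smooth positive function f on V ∩ {x_0 = 0} such that Σ_{i,j} h'_{ij}(y) v_i w_j = f(y) · Σ_{i,j} h_{ij}(y) v_i w_j for every y ∈ V ∩ {x_0 = 0} and all v, w ∈ ℝ^N with v_0 = w_0 = 0; i.e. the conformal class of the boundary restriction of h is independent of the choice of defining function, and defines a canonical conformal structure on the boundary. -/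

import Mathlib

noncomputable section

/-- Kronecker delta on `Fin N`. -/
def kron {N : ℕ} (i j : Fin N) : ℝ := if i = j then 1 else 0

/-- `i`-th coordinate partial derivative of a real-valued function on `ℝ^N`. -/
def pd {N : ℕ} (i : Fin N) (f : (Fin N → ℝ) → ℝ) (x : Fin N → ℝ) : ℝ :=
  fderiv ℝ f x (Pi.single i 1)

/-- Convention: `Γ x i j k` denotes the Christoffel symbol `Γ^k_{ij}` at `x`.
The trace `γ_i := Σ_k Γ^k_{ik}`. -/
def christTrace {N : ℕ} (Γ : (Fin N → ℝ) → Fin N → Fin N → Fin N → ℝ)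
    (x : Fin N → ℝ) (i : Fin N) : ℝ :=
  ∑ k, Γ x i k k

/-- Tracefree part `Ψ^k_{ij} := Γ^k_{ij} − (1/(N+1))(γ_i δ^k_j + γ_j δ^k_i)`. -/
def tracefree {N : ℕ} (Γ : (Fin N → ℝ) → Fin N → Fin N → Fin N → ℝ)
    (x : Fin N → ℝ) (i j k : Fin N) : ℝ :=
  Γ x i j k - (1 / ((N : ℝ) + 1)) *
    (christTrace Γ x i * kron j k + christTrace Γ x j * kron i k)

/-- Projective modification of `Γ` by the one-form `Υ`:
`Γ^k_{ij} + Υ_i δ^k_j + Υ_j δ^k_i`. -/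
def pmod {N : ℕ} (Γ : (Fin N → ℝ) → Fin N → Fin N → Fin N → ℝ)
    (Υ : (Fin N → ℝ) → Fin N → ℝ) (x : Fin N → ℝ) (i j k : Fin N) : ℝ :=
  Γ x i j k + Υ x i * kron j k + Υ x j * kron i k

/-- A Christoffel symbol field on a set `V`: smooth on `V` and symmetric in the
lower indices. -/
def IsChristoffelOn {N : ℕ} (V : Set (Fin N → ℝ))
    (Γ : (Fin N → ℝ) → Fin N → Fin N → Fin N → ℝ) : Prop :=
  ContDiffOn ℝ (⊤ : ℕ∞) Γ V ∧ ∀ x ∈ V, ∀ i j k, Γ x i j k = Γ x j i k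

/-- A pseudo-Riemannian metric in coordinates on `V`, given with its inverse:
`g` is smooth on `V`, symmetric, and `ginv` is a (smooth) pointwise inverse of `g`. -/
def IsMetricOn {N : ℕ} (V : Set (Fin N → ℝ))
    (g ginv : (Fin N → ℝ) → Fin N → Fin N → ℝ) : Prop :=
  ContDiffOn ℝ (⊤ : ℕ∞) g V ∧ ContDiffOn ℝ (⊤ : ℕ∞) ginv V ∧
    (∀ x ∈ V, ∀ i j, g x i j = g x j i) ∧
    (∀ x ∈ V, ∀ i j, (∑ l, g x i l * ginv x l j) = kron i j)

/-- Levi-Civita Christoffel symbols of `g`: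
`Γ^k_{ij} = (1/2) Σ_l g^{kl}(∂_i g_{jl} + ∂_j g_{il} − ∂_l g_{ij})`.
Convention: `LC g ginv x i j k = Γ^k_{ij}(x)`. -/
def LC {N : ℕ} (g ginv : (Fin N → ℝ) → Fin N → Fin N → ℝ)
    (x : Fin N → ℝ) (i j k : Fin N) : ℝ :=
  (1 / 2 : ℝ) * ∑ l, ginv x k l *
    (pd i (fun y => g y j l) x + pd j (fun y => g y i l) x - pd l (fun y => g y i j) x)

/-- Ricci curvature
`Ric_{ij} = Σ_k ∂_k Γ^k_{ij} − Σ_k ∂_j Γ^k_{ki} + Σ_{k,l}(Γ^k_{kl} Γ^l_{ij} − Γ^k_{jl} Γ^l_{ki})`. -/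
def Ricci {N : ℕ} (g ginv : (Fin N → ℝ) → Fin N → Fin N → ℝ)
    (x : Fin N → ℝ) (i j : Fin N) : ℝ :=
  (∑ k, pd k (fun y => LC g ginv y i j k) x)
    - (∑ k, pd j (fun y => LC g ginv y k i k) x)
    + ∑ k, ∑ l,
        (LC g ginv x k l k * LC g ginv x i j l - LC g ginv x j l k * LC g ginv x k i l)

/-- Scalar curvature `S = Σ_{i,j} g^{ij} Ric_{ij}`. -/
def scal {N : ℕ} (g ginv : (Fin N → ℝ) → Fin N → Fin N → ℝ) (x : Fin N → ℝ) : ℝ :=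
  ∑ i, ∑ j, ginv x i j * Ricci g ginv x i j

/-- `|det g(x)|`. -/
def absDet {N : ℕ} (g : (Fin N → ℝ) → Fin N → Fin N → ℝ) (x : Fin N → ℝ) : ℝ :=
  |(Matrix.of (g x)).det|

/-- `τ(x) := |det g(x)|^{−1/(N+1)}`. -/
def tau {N : ℕ} (g : (Fin N → ℝ) → Fin N → Fin N → ℝ) (x : Fin N → ℝ) : ℝ :=
  absDet g x ^ (-(1 : ℝ) / ((N : ℝ) + 1))

/-- `M = U ∩ {x_0 > 0}`. -/
def Mset {N : ℕ} [NeZero N] (U : Set (Fin N → ℝ)) : Set (Fin N → ℝ) :=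
  {x | x ∈ U ∧ 0 < x 0}

/-- `Ū = U ∩ {x_0 ≥ 0}`. -/
def Uclo {N : ℕ} [NeZero N] (U : Set (Fin N → ℝ)) : Set (Fin N → ℝ) :=
  {x | x ∈ U ∧ 0 ≤ x 0}

/-- The boundary `U ∩ {x_0 = 0}`. -/
def Bdry {N : ℕ} [NeZero N] (U : Set (Fin N → ℝ)) : Set (Fin N → ℝ) :=
  {x | x ∈ U ∧ x 0 = 0}

/-- `V` is a relatively open neighborhood of `x` in `A`. -/
def RelOpenNbhd {N : ℕ} (A V : Set (Fin N → ℝ)) (x : Fin N → ℝ) : Prop :=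
  x ∈ V ∧ ∃ O : Set (Fin N → ℝ), IsOpen O ∧ V = O ∩ A

/-- A local defining function for the boundary on a relatively open subset `V` of `Ū`:
smooth on `V`, positive on `V ∩ {x_0 > 0}`, zero on `V ∩ {x_0 = 0}`, with nonvanishing
differential along `V ∩ {x_0 = 0}`. -/
def IsDefiningFnOn {N : ℕ} [NeZero N] (V : Set (Fin N → ℝ)) (r : (Fin N → ℝ) → ℝ) : Prop :=
  ContDiffOn ℝ (⊤ : ℕ∞) r V ∧ (∀ y ∈ V, 0 < y 0 → 0 < r y) ∧
    (∀ y ∈ V, y 0 = 0 → r y = 0) ∧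
    ∀ y ∈ V, y 0 = 0 → fderivWithin ℝ r V y ≠ 0

set_option linter.unusedSectionVars false

open Filter Set Topology Asymptotics

section S15aux

variable {N : ℕ} [NeZero N]

lemma clm_sum_apply (L : (Fin N → ℝ) →L[ℝ] ℝ) (v : Fin N → ℝ) :
    L v = ∑ i, v i * L (Pi.single i 1) := by
  have hv : v = ∑ i, v i • (Pi.single i 1 : Fin N → ℝ) := by
    ext j
    simp [Finset.sum_apply, Pi.single_apply]
  conv_lhs => rw [hv, map_sum]
  simp [smul_eq_mul]

lemma sum_pd (ρ : (Fin N → ℝ) → ℝ) (x : Fin N → ℝ) (v : Fin N → ℝ) :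
    ∑ i, pd i ρ x * v i = fderiv ℝ ρ x v := by
  rw [clm_sum_apply (fderiv ℝ ρ x) v]
  exact Finset.sum_congr rfl fun i _ => mul_comm _ _

lemma contract (K r : ℝ) (A : Fin N → ℝ) (c : Fin N → Fin N → ℝ) (v w : Fin N → ℝ) :
    ∑ i, ∑ j, (K * A i * A j + c i j / r) * v i * w j
      = K * (∑ i, A i * v i) * (∑ j, A j * w j) + (∑ i, ∑ j, c i j * v i * w j) / r := by
  rw [mul_assoc, Finset.sum_mul_sum, Finset.mul_sum, Finset.sum_div, ← Finset.sum_add_distrib]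
  refine Finset.sum_congr rfl fun i _ => ?_
  rw [Finset.mul_sum, Finset.sum_div, ← Finset.sum_add_distrib]
  exact Finset.sum_congr rfl fun j _ => by ring

lemma halfspace_ud : UniqueDiffOn ℝ {x : Fin N → ℝ | 0 ≤ x 0} := by
  apply uniqueDiffOn_convex
  · exact convex_halfSpace_ge ⟨fun a b => rfl, fun a b => rfl⟩ 0
  · refine ⟨Pi.single 0 1, ?_⟩
    have hopen : IsOpen {x : Fin N → ℝ | 0 < x 0} :=
      isOpen_lt continuous_const (continuous_apply 0)
    have hsub : {x : Fin N → ℝ | 0 < x 0} ⊆ {x : Fin N → ℝ | 0 ≤ x 0} :=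
      fun x (hx : 0 < x 0) => le_of_lt hx
    exact hopen.subset_interior_iff.2 hsub (by simp)

lemma V_ud (W : Set (Fin N → ℝ)) (hW : IsOpen W) :
    UniqueDiffOn ℝ (W ∩ {x : Fin N → ℝ | 0 ≤ x 0}) := by
  intro x hx
  rw [Set.inter_comm]
  exact (halfspace_ud x hx.2).inter (hW.mem_nhds hx.1)

lemma single_mem_tangent {W S : Set (Fin N → ℝ)} (hW : IsOpen W)
    (hS : ∀ u : Fin N → ℝ, u ∈ W → u 0 = 0 → u ∈ S)
    {y : Fin N → ℝ} (hyW : y ∈ W) (hy0 : y 0 = 0) {i : Fin N} (hi : i ≠ 0) :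
    (Pi.single i 1 : Fin N → ℝ) ∈ tangentConeAt ℝ S y := by
  have hpos : ∀ n : ℕ, ((n : ℝ) + 1) ≠ 0 := fun n => by positivity
  refine mem_tangentConeAt_of_seq (α := ℕ) atTop (fun n => (n : ℝ) + 1) (fun n => ((n : ℝ) + 1)⁻¹ • (Pi.single i 1 : Fin N → ℝ)) ?_ ?_ ?_
  swap
  · have h0 : Tendsto (fun n : ℕ => ((n : ℝ) + 1)) atTop atTop :=
      tendsto_atTop_add_const_right atTop 1 tendsto_natCast_atTop_atTop
    have h1 : Tendsto (fun n : ℕ => ((n : ℝ) + 1)⁻¹) atTop (𝓝 0) :=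
      h0.inv_tendsto_atTop
    have h2 : Tendsto (fun n : ℕ => y + ((n : ℝ) + 1)⁻¹ • (Pi.single i 1 : Fin N → ℝ))
        atTop (𝓝 y) := by
      simpa using tendsto_const_nhds.add (h1.smul_const (Pi.single i 1 : Fin N → ℝ))
    filter_upwards [h2.eventually_mem (hW.mem_nhds hyW)] with n hn
    refine hS _ hn ?_
    simp [hy0, Pi.single_eq_of_ne (Ne.symm hi)]
  · have h0 : Tendsto (fun n : ℕ => ((n : ℝ) + 1)) atTop atTop :=
      tendsto_atTop_add_const_right atTop 1 tendsto_natCast_atTop_atTop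
    simpa using h0.inv_tendsto_atTop.smul_const (Pi.single i 1 : Fin N → ℝ)
  · have : (fun n : ℕ => ((n : ℝ) + 1) • (((n : ℝ) + 1)⁻¹ • (Pi.single i 1 : Fin N → ℝ)))
        = fun _ => (Pi.single i 1 : Fin N → ℝ) := by
      funext n
      rw [smul_smul, mul_inv_cancel₀ (hpos n), one_smul]
    rw [this]
    exact tendsto_const_nhds

lemma path_mem {W : Set (Fin N → ℝ)} (hW : IsOpen W)
    {y : Fin N → ℝ} (hyW : y ∈ W) (hy0 : y 0 = 0) :
    ∃ δ : ℝ, 0 < δ ∧ Metric.closedBall y δ ⊆ W ∧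
      ∀ t ∈ Ioc (0 : ℝ) δ,
        y + t • (Pi.single 0 1 : Fin N → ℝ) ∈ Metric.closedBall y δ ∧
        (y + t • (Pi.single 0 1 : Fin N → ℝ)) 0 = t := by
  obtain ⟨ε, hε, hball⟩ := Metric.isOpen_iff.1 hW y hyW
  refine ⟨ε / 2, by positivity, (Metric.closedBall_subset_ball (by linarith)).trans hball, ?_⟩
  intro t ht
  constructor
  · rw [Metric.mem_closedBall, dist_eq_norm, add_sub_cancel_left, norm_smul,
      Real.norm_eq_abs, abs_of_pos ht.1, Pi.norm_single, norm_one, mul_one]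
    exact ht.2
  · simp [hy0]

end S15aux

section S15aux2

variable {N : ℕ} [NeZero N]

set_option linter.unusedSectionVars false in
lemma defining_asympt {W : Set (Fin N → ℝ)} (hW : IsOpen W)
    {V : Set (Fin N → ℝ)} (hVeq : V = W ∩ {x : Fin N → ℝ | 0 ≤ x 0})
    {ρ : (Fin N → ℝ) → ℝ} (hρ : IsDefiningFnOn V ρ)
    {y : Fin N → ℝ} (hy : y ∈ V) (hy0 : y 0 = 0) :
    (∀ v : Fin N → ℝ, v 0 = 0 → fderivWithin ℝ ρ V y v = 0) ∧
    0 < fderivWithin ℝ ρ V y (Pi.single 0 1) ∧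
    Tendsto (fun t : ℝ => ρ (y + t • (Pi.single 0 1 : Fin N → ℝ)) / t) (𝓝[>] (0 : ℝ))
      (𝓝 (fderivWithin ℝ ρ V y (Pi.single 0 1))) := by
  have hUD : UniqueDiffOn ℝ V := hVeq ▸ V_ud W hW
  have hyW : y ∈ W := (hVeq ▸ hy).1
  set L := fderivWithin ℝ ρ V y with hL
  have hdiff : DifferentiableWithinAt ℝ ρ V y :=
    (hρ.1.differentiableOn (by simp)) y hy
  have hfd : HasFDerivWithinAt ρ L V y := hdiff.hasFDerivWithinAt
  -- tangential vanishing on basis vectors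
  have hbasis : ∀ i : Fin N, i ≠ 0 → L (Pi.single i 1) = 0 := by
    intro i hi
    set S : Set (Fin N → ℝ) := {z | z ∈ V ∧ z 0 = 0} with hSdef
    have hSsub : S ⊆ V := fun z hz => hz.1
    have h0 : ∀ z ∈ S, ρ z = 0 := fun z hz => hρ.2.2.1 z hz.1 hz.2
    have hconst : HasFDerivWithinAt ρ (0 : (Fin N → ℝ) →L[ℝ] ℝ) S y :=
      (hasFDerivWithinAt_const (0 : ℝ) y S).congr (fun z hz => h0 z hz) (h0 y ⟨hy, hy0⟩)
    have heq := (hfd.mono hSsub).unique_on hconst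
    have hmem : (Pi.single i 1 : Fin N → ℝ) ∈ tangentConeAt ℝ S y := by
      refine single_mem_tangent hW (fun u hu hu0 => ?_) hyW hy0 hi
      exact ⟨hVeq ▸ ⟨hu, hu0.ge⟩, hu0⟩
    simpa using heq hmem
  have htanv : ∀ v : Fin N → ℝ, v 0 = 0 → L v = 0 := by
    intro v hv
    rw [clm_sum_apply L v]
    refine Finset.sum_eq_zero fun i _ => ?_
    by_cases hi : i = 0
    · subst hi; simp [hv]
    · simp [hbasis i hi]
  -- the path
  obtain ⟨δ, hδ, hballW, hpath⟩ := path_mem hW hyW hy0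
  have hmemV : ∀ t ∈ Ioc (0 : ℝ) δ, y + t • (Pi.single 0 1 : Fin N → ℝ) ∈ V := by
    intro t ht
    rw [hVeq]
    exact ⟨hballW (hpath t ht).1, by rw [Set.mem_setOf_eq, (hpath t ht).2]; exact ht.1.le⟩
  have hzcont : Tendsto (fun t : ℝ => y + t • (Pi.single 0 1 : Fin N → ℝ)) (𝓝[>] 0) (𝓝 y) := by
    have hc : Continuous fun t : ℝ => y + t • (Pi.single 0 1 : Fin N → ℝ) :=
      continuous_const.add (continuous_id.smul continuous_const)
    have := hc.tendsto 0
    simp only [zero_smul, add_zero] at this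
    exact this.mono_left nhdsWithin_le_nhds
  have hzpath : Tendsto (fun t : ℝ => y + t • (Pi.single 0 1 : Fin N → ℝ)) (𝓝[>] 0) (𝓝[V] y) := by
    rw [tendsto_nhdsWithin_iff]
    refine ⟨hzcont, ?_⟩
    filter_upwards [Ioc_mem_nhdsGT hδ] with t ht using hmemV t ht
  have hρy : ρ y = 0 := hρ.2.2.1 y hy hy0
  -- little-o and the quotient limit
  have ho := hfd.isLittleO
  have ho2 := ho.comp_tendsto hzpath
  simp only [Function.comp_def] at ho2
  have h1 : (fun t : ℝ => ρ (y + t • (Pi.single 0 1 : Fin N → ℝ)) - t * L (Pi.single 0 1))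
      =ᶠ[𝓝[>] (0:ℝ)] fun t =>
        ρ (y + t • (Pi.single 0 1 : Fin N → ℝ)) - ρ y
          - L (y + t • (Pi.single 0 1 : Fin N → ℝ) - y) := by
    filter_upwards with t
    rw [hρy, sub_zero, add_sub_cancel_left, map_smul, smul_eq_mul]
  have hbigO : (fun t : ℝ => y + t • (Pi.single 0 1 : Fin N → ℝ) - y)
      =O[𝓝[>] (0:ℝ)] fun t => t := by
    refine Asymptotics.IsBigO.of_bound ‖(Pi.single 0 1 : Fin N → ℝ)‖ ?_
    filter_upwards with t
    rw [add_sub_cancel_left, norm_smul, mul_comm]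
  have ho3 : (fun t : ℝ => ρ (y + t • (Pi.single 0 1 : Fin N → ℝ)) - t * L (Pi.single 0 1))
      =o[𝓝[>] (0:ℝ)] fun t : ℝ => t :=
    (ho2.congr' h1.symm EventuallyEq.rfl).trans_isBigO hbigO
  have hquot0 := ho3.tendsto_div_nhds_zero
  have htend : Tendsto (fun t : ℝ => ρ (y + t • (Pi.single 0 1 : Fin N → ℝ)) / t) (𝓝[>] (0:ℝ))
      (𝓝 (L (Pi.single 0 1))) := by
    have h2 := hquot0.add_const (L (Pi.single 0 1))
    rw [zero_add] at h2
    refine h2.congr' ?_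
    filter_upwards [self_mem_nhdsWithin] with t (ht : (0:ℝ) < t)
    field_simp
    ring
  -- positivity
  have hpos : ∀ᶠ t in 𝓝[>] (0:ℝ), 0 ≤ ρ (y + t • (Pi.single 0 1 : Fin N → ℝ)) / t := by
    filter_upwards [Ioc_mem_nhdsGT hδ] with t ht
    have h3 : 0 < ρ (y + t • (Pi.single 0 1 : Fin N → ℝ)) := by
      refine hρ.2.1 _ (hmemV t ht) ?_
      rw [(hpath t ht).2]; exact ht.1
    exact (div_pos h3 ht.1).le
  have ha_nonneg : 0 ≤ L (Pi.single 0 1) := ge_of_tendsto htend hpos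
  have ha_ne : L (Pi.single 0 1) ≠ 0 := by
    intro hzero
    have hLzero : L = 0 := by
      refine ContinuousLinearMap.ext fun u => ?_
      rw [clm_sum_apply L u, ContinuousLinearMap.zero_apply]
      refine Finset.sum_eq_zero fun i _ => ?_
      by_cases hi : i = 0
      · subst hi; simp [hzero]
      · simp [hbasis i hi]
    exact hρ.2.2.2 y hy hy0 hLzero
  exact ⟨htanv, lt_of_le_of_ne ha_nonneg (Ne.symm ha_ne), htend⟩

end S15aux2

section S15aux3

variable {N : ℕ} [NeZero N]

set_option linter.unusedSectionVars false in
lemma deriv_bound {W : Set (Fin N → ℝ)} (hW : IsOpen W)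
    {V : Set (Fin N → ℝ)} (hVeq : V = W ∩ {x : Fin N → ℝ | 0 ≤ x 0})
    {ρ : (Fin N → ℝ) → ℝ} (hsm : ContDiffOn ℝ (⊤ : ℕ∞) ρ V)
    {y : Fin N → ℝ} (hy : y ∈ V) (hy0 : y 0 = 0)
    (v : Fin N → ℝ) (hv : fderivWithin ℝ ρ V y v = 0) :
    ∃ δ : ℝ, 0 < δ ∧ ∃ M : ℝ, 0 ≤ M ∧ ∀ t ∈ Ioc (0:ℝ) δ,
      |fderiv ℝ ρ (y + t • (Pi.single 0 1 : Fin N → ℝ)) v| ≤ M * t := by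
  have hUD : UniqueDiffOn ℝ V := hVeq ▸ V_ud W hW
  have hyW : y ∈ W := (hVeq ▸ hy).1
  obtain ⟨δ, hδ, hballW, hpath⟩ := path_mem hW hyW hy0
  set s : Set (Fin N → ℝ) := Metric.closedBall y δ ∩ {x : Fin N → ℝ | 0 ≤ x 0} with hsdef
  have hsV : s ⊆ V := fun x hx => hVeq ▸ ⟨hballW hx.1, hx.2⟩
  have hconv : Convex ℝ s :=
    (convex_closedBall y δ).inter (convex_halfSpace_ge ⟨fun a b => rfl, fun a b => rfl⟩ 0)
  have hcomp : IsCompact s :=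
    (isCompact_closedBall y δ).inter_right (isClosed_le continuous_const (continuous_apply 0))
  have hys : y ∈ s := ⟨Metric.mem_closedBall_self hδ.le, hy0.ge⟩
  have hUDs : UniqueDiffOn ℝ s := by
    refine uniqueDiffOn_convex hconv ⟨y + (δ/2) • (Pi.single 0 1 : Fin N → ℝ), ?_⟩
    have hop : IsOpen (Metric.ball y δ ∩ {x : Fin N → ℝ | 0 < x 0}) :=
      Metric.isOpen_ball.inter (isOpen_lt continuous_const (continuous_apply 0))
    have hsub : Metric.ball y δ ∩ {x : Fin N → ℝ | 0 < x 0} ⊆ s :=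
      fun x hx => ⟨Metric.ball_subset_closedBall hx.1, by
        have h0x : (0:ℝ) < x 0 := hx.2
        exact le_of_lt h0x⟩
    refine hop.subset_interior_iff.2 hsub ⟨?_, ?_⟩
    · rw [Metric.mem_ball, dist_eq_norm, add_sub_cancel_left, norm_smul, Real.norm_eq_abs,
        abs_of_pos (by positivity : (0:ℝ) < δ/2), Pi.norm_single, norm_one, mul_one]
      linarith
    · show 0 < (y + (δ/2) • (Pi.single 0 1 : Fin N → ℝ)) 0
      simp [hy0]
      positivity
  -- the function Φ = (fderivWithin ρ V ·) v
  have hF : ContDiffOn ℝ 1 (fderivWithin ℝ ρ V) V := by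
    refine ContDiffOn.fderivWithin (n := 2) (hsm.of_le (by norm_cast)) hUD ?_
    norm_num
  have hΦ : ContDiffOn ℝ 1 (fun x => fderivWithin ℝ ρ V x v) V :=
    hF.clm_apply contDiffOn_const
  have hΦs : ContDiffOn ℝ 1 (fun x => fderivWithin ℝ ρ V x v) s := hΦ.mono hsV
  have hdΦ : DifferentiableOn ℝ (fun x => fderivWithin ℝ ρ V x v) s :=
    hΦs.differentiableOn one_ne_zero
  have hcont : ContinuousOn
      (fun x => ‖fderivWithin ℝ (fun x => fderivWithin ℝ ρ V x v) s x‖) s :=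
    (hΦs.continuousOn_fderivWithin hUDs le_rfl).norm
  obtain ⟨zmax, _, hmax⟩ := hcomp.exists_isMaxOn ⟨y, hys⟩ hcont
  set M0 : ℝ := ‖fderivWithin ℝ (fun x => fderivWithin ℝ ρ V x v) s zmax‖ with hM0
  refine ⟨δ, hδ, M0 * ‖(Pi.single 0 1 : Fin N → ℝ)‖, by positivity, ?_⟩
  intro t ht
  set z := y + t • (Pi.single 0 1 : Fin N → ℝ) with hz
  have hzs : z ∈ s := ⟨(hpath t ht).1, by
    show (0:ℝ) ≤ z 0
    rw [hz, (hpath t ht).2]; exact ht.1.le⟩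
  have hbound := hconv.norm_image_sub_le_of_norm_fderivWithin_le hdΦ
    (fun x hx => hmax hx) hys hzs
  have hVnhds : V ∈ 𝓝 z := by
    have hop : IsOpen (W ∩ {x : Fin N → ℝ | 0 < x 0}) :=
      hW.inter (isOpen_lt continuous_const (continuous_apply 0))
    refine Filter.mem_of_superset (hop.mem_nhds ⟨hballW (hpath t ht).1, ?_⟩) ?_
    · show (0:ℝ) < z 0
      rw [hz, (hpath t ht).2]; exact ht.1
    · rw [hVeq]
      intro x hx
      have h0x : (0:ℝ) < x 0 := hx.2
      exact ⟨hx.1, le_of_lt h0x⟩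
  rw [hv, sub_zero, add_sub_cancel_left, norm_smul,
    fderivWithin_of_mem_nhds hVnhds] at hbound
  have ht' : ‖t‖ = t := by rw [Real.norm_eq_abs, abs_of_pos ht.1]
  calc |fderiv ℝ ρ z v| = ‖fderiv ℝ ρ z v‖ := (Real.norm_eq_abs _).symm
    _ ≤ M0 * (‖t‖ * ‖(Pi.single 0 1 : Fin N → ℝ)‖) := hbound
    _ = M0 * ‖(Pi.single 0 1 : Fin N → ℝ)‖ * t := by rw [ht']; ring

end S15aux3

section S15aux4

variable {N : ℕ} [NeZero N]

set_option linter.unusedSectionVars false in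
lemma path_tendsto {W : Set (Fin N → ℝ)} (hW : IsOpen W)
    {V : Set (Fin N → ℝ)} (hVeq : V = W ∩ {x : Fin N → ℝ | 0 ≤ x 0})
    {y : Fin N → ℝ} (hy : y ∈ V) (hy0 : y 0 = 0) :
    Tendsto (fun t : ℝ => y + t • (Pi.single 0 1 : Fin N → ℝ)) (𝓝[>] (0:ℝ)) (𝓝[V] y) := by
  have hyW : y ∈ W := (hVeq ▸ hy).1
  obtain ⟨δ, hδ, hballW, hpath⟩ := path_mem hW hyW hy0
  have hmemV : ∀ t ∈ Ioc (0 : ℝ) δ, y + t • (Pi.single 0 1 : Fin N → ℝ) ∈ V := by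
    intro t ht
    rw [hVeq]
    exact ⟨hballW (hpath t ht).1, by rw [Set.mem_setOf_eq, (hpath t ht).2]; exact ht.1.le⟩
  have hzcont : Tendsto (fun t : ℝ => y + t • (Pi.single 0 1 : Fin N → ℝ)) (𝓝[>] 0) (𝓝 y) := by
    have hc : Continuous fun t : ℝ => y + t • (Pi.single 0 1 : Fin N → ℝ) :=
      continuous_const.add (continuous_id.smul continuous_const)
    have := hc.tendsto 0
    simp only [zero_smul, add_zero] at this
    exact this.mono_left nhdsWithin_le_nhds
  rw [tendsto_nhdsWithin_iff]
  refine ⟨hzcont, ?_⟩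
  filter_upwards [Ioc_mem_nhdsGT hδ] with t ht using hmemV t ht

end S15aux4

section S15aux5
variable {N : ℕ} [NeZero N]
set_option linter.unusedSectionVars false in
lemma contract' (K r : ℝ) (f : (Fin N → ℝ) → ℝ) (x : Fin N → ℝ) (c : Fin N → Fin N → ℝ)
    (v w : Fin N → ℝ) :
    ∑ i, ∑ j, (K * pd i f x * pd j f x + c i j / r) * v i * w j
      = K * fderiv ℝ f x v * fderiv ℝ f x w + (∑ i, ∑ j, c i j * v i * w j) / r := by
  rw [← sum_pd f x v, ← sum_pd f x w]
  rw [mul_assoc, Finset.sum_mul_sum, Finset.mul_sum, Finset.sum_div, ← Finset.sum_add_distrib]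
  refine Finset.sum_congr rfl fun i _ => ?_
  rw [Finset.mul_sum, Finset.sum_div, ← Finset.sum_add_distrib]
  exact Finset.sum_congr rfl fun j _ => by ring
end S15aux5

set_option maxHeartbeats 2000000 in
/-- uniqueness of the induced conformal structure on the boundary: two
asymptotic forms `g = C ρ^{−2} dρ² + ρ^{−1} h = C ρ'^{−2} dρ'² + ρ'^{−1} h'` with the same
constant `C ≠ 0` give boundary restrictions of `h` and `h'` differing by a smooth positive
factor. -/
theorem stmt15 {N : ℕ} [NeZero N] (hN : 2 ≤ N) (U : Set (Fin N → ℝ)) (hU : IsOpen U)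
    (hB : (Bdry U).Nonempty)
    (g ginv : (Fin N → ℝ) → Fin N → Fin N → ℝ) (hg : IsMetricOn (Mset U) g ginv)
    (V : Set (Fin N → ℝ)) (hVsub : V ⊆ Uclo U)
    (hVopen : ∃ O : Set (Fin N → ℝ), IsOpen O ∧ V = O ∩ Uclo U)
    (hVconn : IsConnected V) (hVB : (V ∩ Bdry U).Nonempty)
    (C : ℝ) (hC : C ≠ 0)
    (ρ ρ' : (Fin N → ℝ) → ℝ) (hρ : IsDefiningFnOn V ρ) (hρ' : IsDefiningFnOn V ρ')
    (h h' : (Fin N → ℝ) → Fin N → Fin N → ℝ)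
    (hh : ContDiffOn ℝ (⊤ : ℕ∞) h V) (hh' : ContDiffOn ℝ (⊤ : ℕ∞) h' V)
    (hhsym : ∀ y ∈ V, ∀ i j, h y i j = h y j i)
    (hh'sym : ∀ y ∈ V, ∀ i j, h' y i j = h' y j i)
    (hhnd : ∀ y ∈ V, y 0 = 0 → ∀ v : Fin N → ℝ, v 0 = 0 →
      (∀ w : Fin N → ℝ, w 0 = 0 → (∑ i, ∑ j, h y i j * v i * w j) = 0) → v = 0)
    (hh'nd : ∀ y ∈ V, y 0 = 0 → ∀ v : Fin N → ℝ, v 0 = 0 →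
      (∀ w : Fin N → ℝ, w 0 = 0 → (∑ i, ∑ j, h' y i j * v i * w j) = 0) → v = 0)
    (hform : ∀ y ∈ V ∩ Mset U, ∀ i j,
      g y i j = C / (ρ y) ^ 2 * pd i ρ y * pd j ρ y + h y i j / ρ y)
    (hform' : ∀ y ∈ V ∩ Mset U, ∀ i j,
      g y i j = C / (ρ' y) ^ 2 * pd i ρ' y * pd j ρ' y + h' y i j / ρ' y) :
    ∃ f : (Fin N → ℝ) → ℝ, ContDiffOn ℝ (⊤ : ℕ∞) f {y ∈ V | y 0 = 0} ∧
      (∀ y ∈ V, y 0 = 0 → 0 < f y) ∧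
      ∀ y ∈ V, y 0 = 0 → ∀ v w : Fin N → ℝ, v 0 = 0 → w 0 = 0 →
        (∑ i, ∑ j, h' y i j * v i * w j) = f y * ∑ i, ∑ j, h y i j * v i * w j := by
  classical
  obtain ⟨O, hO, hVO⟩ := hVopen
  have hWopen : IsOpen (O ∩ U) := hO.inter hU
  have hVeq : V = (O ∩ U) ∩ {x : Fin N → ℝ | 0 ≤ x 0} := by
    rw [hVO]
    ext x
    simp only [Uclo, Set.mem_inter_iff, Set.mem_setOf_eq]
    tauto
  have hUD : UniqueDiffOn ℝ V := hVeq ▸ V_ud _ hWopen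
  have hkey : ∀ y ∈ V, y 0 = 0 →
      0 < fderivWithin ℝ ρ V y (Pi.single 0 1) ∧
      0 < fderivWithin ℝ ρ' V y (Pi.single 0 1) ∧
      ∀ v w : Fin N → ℝ, v 0 = 0 → w 0 = 0 →
        (∑ i, ∑ j, h' y i j * v i * w j)
          = (fderivWithin ℝ ρ' V y (Pi.single 0 1) / fderivWithin ℝ ρ V y (Pi.single 0 1))
              * ∑ i, ∑ j, h y i j * v i * w j := by
    intro y hy hy0
    obtain ⟨htan, hapos, hatend⟩ := defining_asympt hWopen hVeq hρ hy hy0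
    obtain ⟨htan', hapos', hatend'⟩ := defining_asympt hWopen hVeq hρ' hy hy0
    refine ⟨hapos, hapos', ?_⟩
    intro v w hv hw
    have hyW : y ∈ O ∩ U := (hVeq ▸ hy).1
    obtain ⟨δ0, hδ0, hballW, hpath⟩ := path_mem hWopen hyW hy0
    obtain ⟨δ1, hδ1, M1, hM1, hb1⟩ := deriv_bound hWopen hVeq hρ.1 hy hy0 v (htan v hv)
    obtain ⟨δ2, hδ2, M2, hM2, hb2⟩ := deriv_bound hWopen hVeq hρ.1 hy hy0 w (htan w hw)
    obtain ⟨δ3, hδ3, M3, hM3, hb3⟩ := deriv_bound hWopen hVeq hρ'.1 hy hy0 v (htan' v hv)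
    obtain ⟨δ4, hδ4, M4, hM4, hb4⟩ := deriv_bound hWopen hVeq hρ'.1 hy hy0 w (htan' w hw)
    have hδ : 0 < min δ0 (min δ1 (min δ2 (min δ3 δ4))) :=
      lt_min hδ0 (lt_min hδ1 (lt_min hδ2 (lt_min hδ3 hδ4)))
    set δ : ℝ := min δ0 (min δ1 (min δ2 (min δ3 δ4))) with hδdef
    have hs0 : Ioc (0:ℝ) δ ⊆ Ioc 0 δ0 := Set.Ioc_subset_Ioc_right (min_le_left _ _)
    have hs1 : Ioc (0:ℝ) δ ⊆ Ioc 0 δ1 :=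
      Set.Ioc_subset_Ioc_right ((min_le_right _ _).trans (min_le_left _ _))
    have hs2 : Ioc (0:ℝ) δ ⊆ Ioc 0 δ2 :=
      Set.Ioc_subset_Ioc_right ((min_le_right _ _).trans ((min_le_right _ _).trans (min_le_left _ _)))
    have hs3 : Ioc (0:ℝ) δ ⊆ Ioc 0 δ3 :=
      Set.Ioc_subset_Ioc_right ((min_le_right _ _).trans ((min_le_right _ _).trans
        ((min_le_right _ _).trans (min_le_left _ _))))
    have hs4 : Ioc (0:ℝ) δ ⊆ Ioc 0 δ4 :=
      Set.Ioc_subset_Ioc_right ((min_le_right _ _).trans ((min_le_right _ _).trans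
        ((min_le_right _ _).trans (min_le_right _ _))))
    have hmem : ∀ t ∈ Ioc (0:ℝ) δ, (y + t • (Pi.single 0 1 : Fin N → ℝ)) ∈ V ∩ Mset U := by
      intro t ht
      have hW' := hballW (hpath t (hs0 ht)).1
      have ht0 : (y + t • (Pi.single 0 1 : Fin N → ℝ)) 0 = t := (hpath t (hs0 ht)).2
      refine ⟨hVeq ▸ ⟨hW', ?_⟩, hW'.2, ?_⟩
      · rw [Set.mem_setOf_eq, ht0]; exact ht.1.le
      · rw [ht0]; exact ht.1
    have hrpos : ∀ t ∈ Ioc (0:ℝ) δ, 0 < ρ (y + t • (Pi.single 0 1 : Fin N → ℝ)) := fun t ht =>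
      hρ.2.1 _ (hmem t ht).1 (by rw [(hpath t (hs0 ht)).2]; exact ht.1)
    have hr'pos : ∀ t ∈ Ioc (0:ℝ) δ, 0 < ρ' (y + t • (Pi.single 0 1 : Fin N → ℝ)) := fun t ht =>
      hρ'.2.1 _ (hmem t ht).1 (by rw [(hpath t (hs0 ht)).2]; exact ht.1)
    -- the contracted identity
    have hEq : ∀ t ∈ Ioc (0:ℝ) δ,
        C / ρ (y + t • (Pi.single 0 1 : Fin N → ℝ)) ^ 2 * fderiv ℝ ρ (y + t • (Pi.single 0 1 : Fin N → ℝ)) v * fderiv ℝ ρ (y + t • (Pi.single 0 1 : Fin N → ℝ)) w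
          + (∑ i, ∑ j, h (y + t • (Pi.single 0 1 : Fin N → ℝ)) i j * v i * w j) / ρ (y + t • (Pi.single 0 1 : Fin N → ℝ))
        = C / ρ' (y + t • (Pi.single 0 1 : Fin N → ℝ)) ^ 2 * fderiv ℝ ρ' (y + t • (Pi.single 0 1 : Fin N → ℝ)) v * fderiv ℝ ρ' (y + t • (Pi.single 0 1 : Fin N → ℝ)) w
          + (∑ i, ∑ j, h' (y + t • (Pi.single 0 1 : Fin N → ℝ)) i j * v i * w j) / ρ' (y + t • (Pi.single 0 1 : Fin N → ℝ)) := by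
      intro t ht
      rw [← contract' (C / ρ (y + t • (Pi.single 0 1 : Fin N → ℝ)) ^ 2) (ρ (y + t • (Pi.single 0 1 : Fin N → ℝ))) ρ (y + t • (Pi.single 0 1 : Fin N → ℝ)) (h (y + t • (Pi.single 0 1 : Fin N → ℝ))) v w,
        ← contract' (C / ρ' (y + t • (Pi.single 0 1 : Fin N → ℝ)) ^ 2) (ρ' (y + t • (Pi.single 0 1 : Fin N → ℝ))) ρ' (y + t • (Pi.single 0 1 : Fin N → ℝ)) (h' (y + t • (Pi.single 0 1 : Fin N → ℝ))) v w]
      refine Finset.sum_congr rfl fun i _ => Finset.sum_congr rfl fun j _ => ?_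
      rw [← hform _ (hmem t ht) i j, ← hform' _ (hmem t ht) i j]
    -- limits
    have hzpath := path_tendsto hWopen hVeq hy hy0
    have htt : Tendsto (fun t : ℝ => t) (𝓝[>] (0:ℝ)) (𝓝 0) :=
      tendsto_id.mono_right nhdsWithin_le_nhds
    have hinv : Tendsto (fun t : ℝ => t / ρ (y + t • (Pi.single 0 1 : Fin N → ℝ))) (𝓝[>] (0:ℝ))
        (𝓝 (fderivWithin ℝ ρ V y (Pi.single 0 1))⁻¹) := by
      simpa [inv_div] using hatend.inv₀ hapos.ne'
    have hinv' : Tendsto (fun t : ℝ => t / ρ' (y + t • (Pi.single 0 1 : Fin N → ℝ))) (𝓝[>] (0:ℝ))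
        (𝓝 (fderivWithin ℝ ρ' V y (Pi.single 0 1))⁻¹) := by
      simpa [inv_div] using hatend'.inv₀ hapos'.ne'
    have htendH : Tendsto (fun t : ℝ => ∑ i, ∑ j, h (y + t • (Pi.single 0 1 : Fin N → ℝ)) i j * v i * w j) (𝓝[>] (0:ℝ))
        (𝓝 (∑ i, ∑ j, h y i j * v i * w j)) := by
      refine tendsto_finset_sum _ fun i _ => tendsto_finset_sum _ fun j _ => ?_
      have h1 : Tendsto (fun m : Fin N → Fin N → ℝ => m i j) (𝓝 (h y)) (𝓝 (h y i j)) :=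
        ((continuous_apply j).comp (continuous_apply i)).tendsto (h y)
      exact ((h1.comp ((hh.continuousOn y hy).tendsto.comp hzpath)).mul_const (v i)).mul_const (w j)
    have htendH' : Tendsto (fun t : ℝ => ∑ i, ∑ j, h' (y + t • (Pi.single 0 1 : Fin N → ℝ)) i j * v i * w j) (𝓝[>] (0:ℝ))
        (𝓝 (∑ i, ∑ j, h' y i j * v i * w j)) := by
      refine tendsto_finset_sum _ fun i _ => tendsto_finset_sum _ fun j _ => ?_
      have h1 : Tendsto (fun m : Fin N → Fin N → ℝ => m i j) (𝓝 (h' y)) (𝓝 (h' y i j)) :=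
        ((continuous_apply j).comp (continuous_apply i)).tendsto (h' y)
      exact ((h1.comp ((hh'.continuousOn y hy).tendsto.comp hzpath)).mul_const (v i)).mul_const (w j)
    have T1 : Tendsto (fun t : ℝ => C * (fderiv ℝ ρ (y + t • (Pi.single 0 1 : Fin N → ℝ)) v * fderiv ℝ ρ (y + t • (Pi.single 0 1 : Fin N → ℝ)) w / ρ (y + t • (Pi.single 0 1 : Fin N → ℝ))))
        (𝓝[>] (0:ℝ)) (𝓝 0) := by
      refine squeeze_zero_norm' ?_ (a := fun t : ℝ => |C| * (M1 * M2 * (t * (t / ρ (y + t • (Pi.single 0 1 : Fin N → ℝ)))))) ?_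
      · filter_upwards [Ioc_mem_nhdsGT hδ] with t ht
        have hr := hrpos t ht
        rw [Real.norm_eq_abs, abs_mul, abs_div, abs_mul, abs_of_pos hr]
        have hbd : |fderiv ℝ ρ (y + t • (Pi.single 0 1 : Fin N → ℝ)) v| * |fderiv ℝ ρ (y + t • (Pi.single 0 1 : Fin N → ℝ)) w| / ρ (y + t • (Pi.single 0 1 : Fin N → ℝ))
            ≤ (M1 * t) * (M2 * t) / ρ (y + t • (Pi.single 0 1 : Fin N → ℝ)) := by
          gcongr <;> first
            | exact hb1 t (hs1 ht)
            | exact hb2 t (hs2 ht)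
            | exact mul_nonneg hM1 ht.1.le
            | exact mul_nonneg hM2 ht.1.le
            | positivity
        calc |C| * (|fderiv ℝ ρ (y + t • (Pi.single 0 1 : Fin N → ℝ)) v| * |fderiv ℝ ρ (y + t • (Pi.single 0 1 : Fin N → ℝ)) w| / ρ (y + t • (Pi.single 0 1 : Fin N → ℝ)))
            ≤ |C| * ((M1 * t) * (M2 * t) / ρ (y + t • (Pi.single 0 1 : Fin N → ℝ))) := mul_le_mul_of_nonneg_left hbd (abs_nonneg C)
          _ = |C| * (M1 * M2 * (t * (t / ρ (y + t • (Pi.single 0 1 : Fin N → ℝ))))) := by ring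
      · have := (tendsto_const_nhds (x := |C|)).mul
          (((tendsto_const_nhds (x := M1 * M2)).mul (htt.mul hinv)))
        simpa using this
    have T2 : Tendsto (fun t : ℝ => C * (ρ (y + t • (Pi.single 0 1 : Fin N → ℝ)) * (fderiv ℝ ρ' (y + t • (Pi.single 0 1 : Fin N → ℝ)) v * fderiv ℝ ρ' (y + t • (Pi.single 0 1 : Fin N → ℝ)) w)
        / ρ' (y + t • (Pi.single 0 1 : Fin N → ℝ)) ^ 2)) (𝓝[>] (0:ℝ)) (𝓝 0) := by
      refine squeeze_zero_norm' ?_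
        (a := fun t : ℝ => |C| * (M3 * M4 * (ρ (y + t • (Pi.single 0 1 : Fin N → ℝ)) / t * (t / ρ' (y + t • (Pi.single 0 1 : Fin N → ℝ))) ^ 2 * t))) ?_
      · filter_upwards [Ioc_mem_nhdsGT hδ] with t ht
        have hr := hrpos t ht
        have hr' := hr'pos t ht
        rw [Real.norm_eq_abs, abs_mul, abs_div, abs_mul, abs_mul, abs_of_pos hr,
          abs_of_pos (pow_pos hr' 2)]
        have hbd : ρ (y + t • (Pi.single 0 1 : Fin N → ℝ)) * (|fderiv ℝ ρ' (y + t • (Pi.single 0 1 : Fin N → ℝ)) v| * |fderiv ℝ ρ' (y + t • (Pi.single 0 1 : Fin N → ℝ)) w|) / ρ' (y + t • (Pi.single 0 1 : Fin N → ℝ)) ^ 2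
            ≤ ρ (y + t • (Pi.single 0 1 : Fin N → ℝ)) * ((M3 * t) * (M4 * t)) / ρ' (y + t • (Pi.single 0 1 : Fin N → ℝ)) ^ 2 := by
          gcongr <;> first
            | exact hb3 t (hs3 ht)
            | exact hb4 t (hs4 ht)
            | exact mul_nonneg hM3 ht.1.le
            | exact mul_nonneg hM4 ht.1.le
            | positivity
        calc |C| * (ρ (y + t • (Pi.single 0 1 : Fin N → ℝ)) * (|fderiv ℝ ρ' (y + t • (Pi.single 0 1 : Fin N → ℝ)) v| * |fderiv ℝ ρ' (y + t • (Pi.single 0 1 : Fin N → ℝ)) w|) / ρ' (y + t • (Pi.single 0 1 : Fin N → ℝ)) ^ 2)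
            ≤ |C| * (ρ (y + t • (Pi.single 0 1 : Fin N → ℝ)) * ((M3 * t) * (M4 * t)) / ρ' (y + t • (Pi.single 0 1 : Fin N → ℝ)) ^ 2) := by
              exact mul_le_mul_of_nonneg_left hbd (abs_nonneg C)
          _ = |C| * (M3 * M4 * (ρ (y + t • (Pi.single 0 1 : Fin N → ℝ)) / t * (t / ρ' (y + t • (Pi.single 0 1 : Fin N → ℝ))) ^ 2 * t)) := by
              have ht0 : t ≠ 0 := ne_of_gt ht.1
              field_simp [ht0, hr'.ne']
      · have := (tendsto_const_nhds (x := |C|)).mul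
          ((tendsto_const_nhds (x := M3 * M4)).mul ((hatend.mul (hinv'.pow 2)).mul htt))
        simpa using this
    have T3 : Tendsto (fun t : ℝ => ρ (y + t • (Pi.single 0 1 : Fin N → ℝ)) / ρ' (y + t • (Pi.single 0 1 : Fin N → ℝ)) * (∑ i, ∑ j, h' (y + t • (Pi.single 0 1 : Fin N → ℝ)) i j * v i * w j))
        (𝓝[>] (0:ℝ))
        (𝓝 (fderivWithin ℝ ρ V y (Pi.single 0 1) / fderivWithin ℝ ρ' V y (Pi.single 0 1)
          * ∑ i, ∑ j, h' y i j * v i * w j)) := by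
      refine Tendsto.mul ?_ htendH'
      have hq := hatend.div hatend' hapos'.ne'
      refine hq.congr' ?_
      filter_upwards [Ioc_mem_nhdsGT hδ] with t ht
      have hr' := hr'pos t ht
      have ht0 : t ≠ 0 := ne_of_gt ht.1
      simp only [Pi.div_apply]
      field_simp [ht0, hr'.ne']
    have G1 : Tendsto (fun t : ℝ => ρ (y + t • (Pi.single 0 1 : Fin N → ℝ)) * (C / ρ (y + t • (Pi.single 0 1 : Fin N → ℝ)) ^ 2 * fderiv ℝ ρ (y + t • (Pi.single 0 1 : Fin N → ℝ)) v * fderiv ℝ ρ (y + t • (Pi.single 0 1 : Fin N → ℝ)) w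
        + (∑ i, ∑ j, h (y + t • (Pi.single 0 1 : Fin N → ℝ)) i j * v i * w j) / ρ (y + t • (Pi.single 0 1 : Fin N → ℝ)))) (𝓝[>] (0:ℝ))
        (𝓝 (∑ i, ∑ j, h y i j * v i * w j)) := by
      have hsum := T1.add htendH
      rw [zero_add] at hsum
      refine hsum.congr' ?_
      filter_upwards [Ioc_mem_nhdsGT hδ] with t ht
      have hr := hrpos t ht
      field_simp [hr.ne']
    have G2 : Tendsto (fun t : ℝ => ρ (y + t • (Pi.single 0 1 : Fin N → ℝ)) * (C / ρ' (y + t • (Pi.single 0 1 : Fin N → ℝ)) ^ 2 * fderiv ℝ ρ' (y + t • (Pi.single 0 1 : Fin N → ℝ)) v * fderiv ℝ ρ' (y + t • (Pi.single 0 1 : Fin N → ℝ)) w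
        + (∑ i, ∑ j, h' (y + t • (Pi.single 0 1 : Fin N → ℝ)) i j * v i * w j) / ρ' (y + t • (Pi.single 0 1 : Fin N → ℝ)))) (𝓝[>] (0:ℝ))
        (𝓝 (fderivWithin ℝ ρ V y (Pi.single 0 1) / fderivWithin ℝ ρ' V y (Pi.single 0 1)
          * ∑ i, ∑ j, h' y i j * v i * w j)) := by
      have hsum := T2.add T3
      rw [zero_add] at hsum
      refine hsum.congr' ?_
      filter_upwards [Ioc_mem_nhdsGT hδ] with t ht
      have hr' := hr'pos t ht
      field_simp [hr'.ne']
    have G2' : Tendsto (fun t : ℝ => ρ (y + t • (Pi.single 0 1 : Fin N → ℝ)) * (C / ρ (y + t • (Pi.single 0 1 : Fin N → ℝ)) ^ 2 * fderiv ℝ ρ (y + t • (Pi.single 0 1 : Fin N → ℝ)) v * fderiv ℝ ρ (y + t • (Pi.single 0 1 : Fin N → ℝ)) w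
        + (∑ i, ∑ j, h (y + t • (Pi.single 0 1 : Fin N → ℝ)) i j * v i * w j) / ρ (y + t • (Pi.single 0 1 : Fin N → ℝ)))) (𝓝[>] (0:ℝ))
        (𝓝 (fderivWithin ℝ ρ V y (Pi.single 0 1) / fderivWithin ℝ ρ' V y (Pi.single 0 1)
          * ∑ i, ∑ j, h' y i j * v i * w j)) := by
      refine G2.congr' ?_
      filter_upwards [Ioc_mem_nhdsGT hδ] with t ht
      rw [hEq t ht]
    have hfinal := tendsto_nhds_unique G1 G2'
    have hane := hapos.ne'
    have ha'ne := hapos'.ne'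
    field_simp at hfinal ⊢
    linarith [hfinal]
  refine ⟨fun y => fderivWithin ℝ ρ' V y (Pi.single 0 1) / fderivWithin ℝ ρ V y (Pi.single 0 1),
    ?_, ?_, ?_⟩
  · have hnum : ContDiffOn ℝ (⊤ : ℕ∞) (fun z => fderivWithin ℝ ρ' V z (Pi.single 0 1)) V := by
      refine ContDiffOn.clm_apply ?_ contDiffOn_const
      exact hρ'.1.fderivWithin hUD (by norm_cast)
    have hden : ContDiffOn ℝ (⊤ : ℕ∞) (fun z => fderivWithin ℝ ρ V z (Pi.single 0 1)) V := by
      refine ContDiffOn.clm_apply ?_ contDiffOn_const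
      exact hρ.1.fderivWithin hUD (by norm_cast)
    have hSV : {y : Fin N → ℝ | y ∈ V ∧ y 0 = 0} ⊆ V := fun z hz => hz.1
    exact (hnum.mono hSV).div (hden.mono hSV) fun z hz => ((hkey z hz.1 hz.2).1).ne'
  · exact fun y hy hy0 => div_pos (hkey y hy hy0).2.1 (hkey y hy hy0).1
  · exact fun y hy hy0 v w hv hw => (hkey y hy hy0).2.2 v w hv hw
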